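/- Let (Γ_n(z)) be the sequence of real polynomials with Γ_0(z)=2+2z, Γ_1(z)=40z+24z^2, Γ_2(z)=48z+720z^2+256z^3, and Γ_n(z) = 20z·Γ_{n-1}(z) + 8z(3-8z)·Γ_{n-2}(z) - 384z^3·Γ_{n-3}(z) for n≥3. Define W_n(z) = Γ_n(z)/z^{⌊(n+1)/2⌋} (which is a polynomial). Then W_n satisfies: W_n(z) = 20z·W_{n-1}(z) + 8(3-8z)·W_{n-2}(z) - 384z^2·W_{n-3}(z) when n is even, and W_n(z) = 20·W_{n-1}(z) + 8(3-8z)·W_{n-2}(z) - 384z·W_{n-3}(z) when n is odd, with W_0(z)=2(1+z), W_1(z)=8(5+3z), W_2(z)=16(3+45z+16z^2). -/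
import Mathlib


open Polynomial

noncomputable def Wdef : ℕ → Polynomial ℝ
  | 0 => 2 * (1 + X)
  | 1 => 8 * (5 + 3 * X)
  | 2 => 16 * (3 + 45 * X + 16 * X ^ 2)
  | n + 3 =>
      if Even n then
        20 * Wdef (n + 2) + 8 * (3 - 8 * X) * Wdef (n + 1) - 384 * X * Wdef n
      else
        20 * X * Wdef (n + 2) + 8 * (3 - 8 * X) * Wdef (n + 1) - 384 * X ^ 2 * Wdef n

theorem stmt7 (Γ : ℕ → Polynomial ℝ)
    (h0 : Γ 0 = 2 + 2 * X) (h1 : Γ 1 = 40 * X + 24 * X ^ 2)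
    (h2 : Γ 2 = 48 * X + 720 * X ^ 2 + 256 * X ^ 3)
    (hrec : ∀ n, Γ (n + 3) =
      20 * X * Γ (n + 2) + 8 * X * (3 - 8 * X) * Γ (n + 1) - 384 * X ^ 3 * Γ n) :
    ∃ W : ℕ → Polynomial ℝ,
      (∀ n, Γ n = X ^ ((n + 1) / 2) * W n) ∧
      W 0 = 2 * (1 + X) ∧ W 1 = 8 * (5 + 3 * X) ∧
      W 2 = 16 * (3 + 45 * X + 16 * X ^ 2) ∧
      (∀ n, (Even (n + 3) → W (n + 3) =
          20 * X * W (n + 2) + 8 * (3 - 8 * X) * W (n + 1) - 384 * X ^ 2 * W n) ∧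
        (Odd (n + 3) → W (n + 3) =
          20 * W (n + 2) + 8 * (3 - 8 * X) * W (n + 1) - 384 * X * W n)) := by
  refine ⟨Wdef, ?_, rfl, rfl, rfl, ?_⟩
  · intro n
    induction n using Nat.strong_induction_on with
    | _ n ih =>
      match n with
      | 0 => simp [h0, Wdef]; ring
      | 1 => simp [h1, Wdef]; ring
      | 2 => simp [h2, Wdef]; ring
      | n + 3 =>
        rw [hrec n, ih (n + 2) (by omega), ih (n + 1) (by omega), ih n (by omega),
          Wdef]
        rcases Nat.even_or_odd n with he | ho
        · obtain ⟨m, rfl⟩ := he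
          rw [if_pos ⟨m, rfl⟩]
          rw [show (m + m + 2 + 1) / 2 = m + 1 from by omega,
            show (m + m + 1 + 1) / 2 = m + 1 from by omega,
            show (m + m + 1) / 2 = m from by omega,
            show (m + m + 3 + 1) / 2 = m + 2 from by omega]
          ring
        · obtain ⟨m, rfl⟩ := ho
          rw [if_neg (by simp [Nat.even_add_one, parity_simps])]
          rw [show (2 * m + 1 + 2 + 1) / 2 = m + 2 from by omega,
            show (2 * m + 1 + 1 + 1) / 2 = m + 1 from by omega,
            show (2 * m + 1 + 1) / 2 = m + 1 from by omega,
            show (2 * m + 1 + 3 + 1) / 2 = m + 2 from by omega]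
          ring
  · intro n
    constructor
    · intro hev
      have hodd : ¬ Even n := by
        simp [Nat.even_iff] at hev ⊢; omega
      rw [Wdef, if_neg hodd]
    · intro hod
      have hev : Even n := by
        rcases Nat.even_or_odd n with h | h
        · exact h
        · exfalso
          rw [Nat.odd_iff] at hod h
          omega
      rw [Wdef, if_pos hev]
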